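/- Let n ≥ 4 and let O be a rotation orbit of triangulations of the n-gon with |O| ≥ 3. Then for any T ∈ O, the sequence T, r(T), r²(T), ..., r^{|O|-1}(T), T is a cycle in the Kneser graph KG(T_n); that is, consecutive terms are disjoint triangulations and the listed triangulations are pairwise distinct. In particular, for n ≥ 7 every rotation orbit induces a cycle in KG(T_n). -/

import Mathlib

/-- `x` lies strictly between `a` and `b` in the cyclic (clockwise) order on `ZMod n`. -/
def NgonBtw (n : ℕ) (a x b : ZMod n) : Prop :=
  0 < (x - a).val ∧ (x - a).val < (b - a).val

/-- Two unordered pairs of vertices of the `n`-gon cross: they have representations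
`{a,b}` and `{c,d}` with `c` strictly inside one open arc determined by `a, b`
and `d` strictly inside the other. -/
def NgonCross (n : ℕ) (e f : Sym2 (ZMod n)) : Prop :=
  ∃ a b c d : ZMod n, e = s(a, b) ∧ f = s(c, d) ∧
    NgonBtw n a c b ∧ NgonBtw n b d a

/-- A diagonal of the convex `n`-gon: an unordered pair `{i,j}` with
`i - j` not congruent to `0`, `1` or `-1` modulo `n`. -/
def IsDiagonal (n : ℕ) (e : Sym2 (ZMod n)) : Prop :=
  ∃ i j : ZMod n, e = s(i, j) ∧ i - j ≠ 0 ∧ i - j ≠ 1 ∧ i - j ≠ -1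

/-- A triangulation of the convex `n`-gon: a set of `n - 3` pairwise
noncrossing diagonals. -/
def IsTriangulation (n : ℕ) (T : Finset (Sym2 (ZMod n))) : Prop :=
  T.card = n - 3 ∧ (∀ e ∈ T, IsDiagonal n e) ∧
    ∀ e ∈ T, ∀ f ∈ T, ¬ NgonCross n e f

/-- Clockwise rotation of a diagonal: `{i,j} ↦ {i+1, j+1}`. -/
def rotDiag (n : ℕ) (e : Sym2 (ZMod n)) : Sym2 (ZMod n) :=
  e.map (· + 1)

/-- Inverse rotation of a diagonal: `{i,j} ↦ {i-1, j-1}`. -/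
def rotInvDiag (n : ℕ) (e : Sym2 (ZMod n)) : Sym2 (ZMod n) :=
  e.map (· - 1)

/-- Clockwise rotation of a triangulation. -/
def rotTri (n : ℕ) (T : Finset (Sym2 (ZMod n))) : Finset (Sym2 (ZMod n)) :=
  T.image (rotDiag n)

/-- Inverse rotation of a triangulation. -/
def rotInvTri (n : ℕ) (T : Finset (Sym2 (ZMod n))) : Finset (Sym2 (ZMod n)) :=
  T.image (rotInvDiag n)

/-- The rotation orbit of a triangulation. -/
def rotOrbit (n : ℕ) (T : Finset (Sym2 (ZMod n))) : Set (Finset (Sym2 (ZMod n))) :=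
  {S | ∃ k : ℕ, S = (rotTri n)^[k] T}

/-- The type of triangulations of the convex `n`-gon. -/
abbrev Triangulation (n : ℕ) : Type := {T : Finset (Sym2 (ZMod n)) // IsTriangulation n T}

/-- The Kneser graph of triangulations of the convex `n`-gon: two triangulations
are adjacent iff they are distinct and share no diagonal. -/
def KGTri (n : ℕ) : SimpleGraph (Triangulation n) where
  Adj T T' := T ≠ T' ∧ Disjoint T.1 T'.1
  symm := ⟨fun T T' h => ⟨h.1.symm, h.2.symm⟩⟩
  loopless := ⟨fun T h => h.1 rfl⟩

noncomputable instance (n : ℕ) [NeZero n] : Fintype (Triangulation n) :=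
  Fintype.ofFinite _

lemma rotDiag_injective (n : ℕ) : Function.Injective (rotDiag n) :=
  Sym2.map.injective (fun a b h => by simpa using h)

lemma rotInv_rot (n : ℕ) (e : Sym2 (ZMod n)) : rotInvDiag n (rotDiag n e) = e := by
  simp [rotInvDiag, rotDiag, Sym2.map_map]

lemma rotTri_injective (n : ℕ) : Function.Injective (rotTri n) := by
  intro S T h
  have : ∀ U : Finset (Sym2 (ZMod n)), (rotTri n U).image (rotInvDiag n) = U := by
    intro U
    rw [rotTri, Finset.image_image]
    simp [Function.comp_def, rotInv_rot]
  rw [← this S, ← this T, h]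

lemma val_one_lt {n : ℕ} (hn : 4 ≤ n) {x : ZMod n} (h0 : x ≠ 0) (h1 : x ≠ 1) :
    1 < x.val := by
  haveI : NeZero n := ⟨by omega⟩
  haveI : Fact (1 < n) := ⟨by omega⟩
  rcases Nat.lt_or_ge x.val 2 with h | h
  · interval_cases hv : x.val
    · exact absurd ((ZMod.val_eq_zero x).mp hv) h0
    · exact absurd (ZMod.val_injective n (by rw [hv, ZMod.val_one])) h1
  · omega

lemma cross_self_rot {n : ℕ} (hn : 4 ≤ n) (e : Sym2 (ZMod n)) (he : IsDiagonal n e) :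
    NgonCross n e (rotDiag n e) := by
  haveI : Fact (1 < n) := ⟨by omega⟩
  obtain ⟨i, j, rfl, h0, h1, h2⟩ := he
  have h0' : j - i ≠ 0 := fun h => h0 (by rw [sub_eq_zero] at h ⊢; exact h.symm)
  have h1' : j - i ≠ 1 := fun h => h2 (by rw [← neg_sub j i, h])
  refine ⟨i, j, i + 1, j + 1, rfl, by simp [rotDiag, Sym2.map_pair_eq], ⟨?_, ?_⟩, ⟨?_, ?_⟩⟩
  · have : i + 1 - i = 1 := by ring
    rw [this, ZMod.val_one]; exact Nat.one_pos
  · have : i + 1 - i = 1 := by ring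
    rw [this, ZMod.val_one]; exact val_one_lt hn h0' h1'
  · have : j + 1 - j = 1 := by ring
    rw [this, ZMod.val_one]; exact Nat.one_pos
  · have : j + 1 - j = 1 := by ring
    rw [this, ZMod.val_one]; exact val_one_lt hn h0 h1

lemma disjoint_rotTri {n : ℕ} (hn : 4 ≤ n) {T : Finset (Sym2 (ZMod n))}
    (hT : IsTriangulation n T) : Disjoint T (rotTri n T) := by
  rw [Finset.disjoint_right]
  intro d hd hdT
  obtain ⟨e, he, rfl⟩ := Finset.mem_image.mp hd
  exact hT.2.2 e he _ hdT (cross_self_rot hn e (hT.2.1 e he))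

lemma cross_of_cross_rot {n : ℕ} {e f : Sym2 (ZMod n)}
    (h : NgonCross n (rotDiag n e) (rotDiag n f)) : NgonCross n e f := by
  obtain ⟨a, b, c, d, he, hf, h1, h2⟩ := h
  have he' : e = s(a - 1, b - 1) := by
    apply rotDiag_injective n
    rw [he, rotDiag, Sym2.map_pair_eq]
    simp
  have hf' : f = s(c - 1, d - 1) := by
    apply rotDiag_injective n
    rw [hf, rotDiag, Sym2.map_pair_eq]
    simp
  refine ⟨a - 1, b - 1, c - 1, d - 1, he', hf', ?_, ?_⟩
  · have e1 : c - 1 - (a - 1) = c - a := by ring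
    have e2 : b - 1 - (a - 1) = b - a := by ring
    rw [NgonBtw, e1, e2]; exact h1
  · have e1 : d - 1 - (b - 1) = d - b := by ring
    have e2 : a - 1 - (b - 1) = a - b := by ring
    rw [NgonBtw, e1, e2]; exact h2

lemma rotTri_isTriangulation {n : ℕ} {T : Finset (Sym2 (ZMod n))}
    (hT : IsTriangulation n T) : IsTriangulation n (rotTri n T) := by
  refine ⟨?_, ?_, ?_⟩
  · rw [rotTri, Finset.card_image_of_injective _ (rotDiag_injective n)]; exact hT.1
  · intro e he
    obtain ⟨e', he', rfl⟩ := Finset.mem_image.mp he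
    obtain ⟨i, j, rfl, g0, g1, g2⟩ := hT.2.1 e' he'
    refine ⟨i + 1, j + 1, by simp [rotDiag, Sym2.map_pair_eq], ?_, ?_, ?_⟩ <;>
      · have : i + 1 - (j + 1) = i - j := by ring
        rw [this]; assumption
  · intro e he f hf hc
    obtain ⟨e', he', rfl⟩ := Finset.mem_image.mp he
    obtain ⟨f', hf', rfl⟩ := Finset.mem_image.mp hf
    exact hT.2.2 e' he' f' hf' (cross_of_cross_rot hc)

lemma rotTri_iterate_isTriangulation {n : ℕ} {T : Finset (Sym2 (ZMod n))}
    (hT : IsTriangulation n T) (k : ℕ) : IsTriangulation n ((rotTri n)^[k] T) := by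
  induction k with
  | zero => exact hT
  | succ k ih => rw [Function.iterate_succ_apply']; exact rotTri_isTriangulation ih

lemma rotTri_iterate_eq (n : ℕ) (T : Finset (Sym2 (ZMod n))) (k : ℕ) :
    (rotTri n)^[k] T = T.image (Sym2.map (· + (k : ZMod n))) := by
  induction k with
  | zero =>
      simp only [Function.iterate_zero, id_eq, Nat.cast_zero]
      have : (Sym2.map (· + (0 : ZMod n))) = id := by
        funext e; simpa using Sym2.map_id e
      rw [this, Finset.image_id]
  | succ k ih =>
      rw [Function.iterate_succ_apply', ih, rotTri, Finset.image_image]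
      congr 1
      funext e
      simp only [Function.comp_apply, rotDiag, Sym2.map_map, Nat.cast_succ]
      congr 1
      funext x
      simp [add_assoc]

lemma rotTri_iterate_n (n : ℕ) (T : Finset (Sym2 (ZMod n))) :
    (rotTri n)^[n] T = T := by
  rw [rotTri_iterate_eq]
  simp only [ZMod.natCast_self]
  have : (Sym2.map (· + (0 : ZMod n))) = id := by
    funext e; simpa using Sym2.map_id e
  rw [this, Finset.image_id]

/-- If a rotation orbit `O` of triangulations of the `n`-gon has size at least `3`
(in particular, whenever `n ≥ 7`), then for `T ∈ O` the sequence
`T, r(T), …, r^{|O|-1}(T), T` is a cycle in the Kneser graph: the listed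
triangulations are pairwise distinct, and cyclically consecutive ones are disjoint. -/
theorem rotation_orbit_induces_cycle (n : ℕ) (hn : 4 ≤ n)
    (T : Finset (Sym2 (ZMod n))) (hT : IsTriangulation n T)
    (hO : 3 ≤ (rotOrbit n T).ncard ∨ 7 ≤ n) :
    (∀ i j : ℕ, i < j → j < (rotOrbit n T).ncard →
        (rotTri n)^[i] T ≠ (rotTri n)^[j] T) ∧
    (∀ i : ℕ, i < (rotOrbit n T).ncard →
        Disjoint ((rotTri n)^[i] T)
          ((rotTri n)^[(i + 1) % (rotOrbit n T).ncard] T)) := by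
  have hex : ∃ k : ℕ, 0 < k ∧ (rotTri n)^[k] T = T :=
    ⟨n, by omega, rotTri_iterate_n n T⟩
  set m := Nat.find hex with hm
  obtain ⟨hm0, hmT⟩ := Nat.find_spec hex
  -- cancellation
  have hcancel : ∀ i j : ℕ, i < j → (rotTri n)^[i] T = (rotTri n)^[j] T →
      (rotTri n)^[j - i] T = T := by
    intro i j hij h
    have hji : i + (j - i) = j := by omega
    have : (rotTri n)^[i] ((rotTri n)^[j - i] T) = (rotTri n)^[i] T := by
      rw [← Function.iterate_add_apply, hji]
      exact h.symm
    exact (rotTri_injective n).iterate i this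
  have hinj : ∀ i j : ℕ, i < m → j < m → (rotTri n)^[i] T = (rotTri n)^[j] T → i = j := by
    intro i j hi hj h
    by_contra hne
    rcases Nat.lt_or_ge i j with hlt | hge
    · have := hcancel i j hlt h
      exact Nat.find_min hex (show j - i < m by omega) ⟨by omega, this⟩
    · have hlt : j < i := by omega
      have := hcancel j i hlt h.symm
      exact Nat.find_min hex (show i - j < m by omega) ⟨by omega, this⟩
  -- periodicity
  have hper : ∀ k : ℕ, (rotTri n)^[k] T = (rotTri n)^[k % m] T := by
    intro k
    conv_lhs => rw [← Nat.mod_add_div k m]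
    rw [Function.iterate_add_apply, Function.iterate_mul,
      Function.iterate_fixed hmT]
  -- orbit cardinality
  have horb : rotOrbit n T = (fun k => (rotTri n)^[k] T) '' Set.Iio m := by
    ext S
    constructor
    · rintro ⟨k, rfl⟩
      exact ⟨k % m, Nat.mod_lt _ hm0, (hper k).symm⟩
    · rintro ⟨k, _, rfl⟩
      exact ⟨k, rfl⟩
  have hcard : (rotOrbit n T).ncard = m := by
    have hinjOn : Set.InjOn (fun k => (rotTri n)^[k] T) (Set.Iio m) :=
      fun i hi j hj h => hinj i j hi hj h
    rw [horb, Set.ncard_image_of_injOn hinjOn, ← Finset.coe_range,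
      Set.ncard_coe_finset, Finset.card_range]
  rw [hcard]
  constructor
  · intro i j hij hj h
    exact absurd (hinj i j (by omega) hj h) (by omega)
  · intro i hi
    have h1 : (rotTri n)^[(i + 1) % m] T = (rotTri n)^[i + 1] T := (hper (i + 1)).symm
    rw [h1, Function.iterate_succ_apply']
    exact disjoint_rotTri hn (rotTri_iterate_isTriangulation hT i)
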